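/- Let M be an n×m matrix with strictly positive entries and let r ∈ ℝ^n, c ∈ ℝ^m be probability vectors with strictly positive entries. For λ > 0 let M^(λ) = Φ(M^[λ], r, c) be the unique minimizer of D_KL(P‖M^[λ]) over P ∈ U(r,c), where (M^[λ])_ij = (M_ij)^λ. Then M^(λ) converges entrywise to the outer product matrix (r_i · c_j)_{ij} as λ → 0⁺. -/

import Mathlib

/-- Relative entropy `D_KL(P‖M) = Σ_{ij} P_ij log(P_ij/M_ij)` (real-valued version,
with `0 log 0 = 0`; adequate when `M` has strictly positive entries). -/
noncomputable def klReal {n m : ℕ} (P M : Matrix (Fin n) (Fin m) ℝ) : ℝ :=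
  ∑ i, ∑ j, P i j * Real.log (P i j / M i j)

/-- `U(r,c)`: nonnegative matrices with row sums `r` and column sums `c`. -/
def transportPolytope {n m : ℕ} (r : Fin n → ℝ) (c : Fin m → ℝ) :
    Set (Matrix (Fin n) (Fin m) ℝ) :=
  {P | (∀ i j, 0 ≤ P i j) ∧ (∀ i, ∑ j, P i j = r i) ∧ (∀ j, ∑ i, P i j = c j)}

section SinkhornAux
open Real

private lemma phi_nonneg (t : ℝ) (ht : 0 ≤ t) : 0 ≤ t * Real.log t - t + 1 := by
  rcases eq_or_lt_of_le ht with h | h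
  · simp [← h]
  · have h1 : Real.log (1/t) ≤ 1/t - 1 := Real.log_le_sub_one_of_pos (by positivity)
    rw [Real.log_div one_ne_zero h.ne', Real.log_one] at h1
    have h2 : t * (0 - Real.log t) ≤ t * (1/t - 1) := by
      apply mul_le_mul_of_nonneg_left _ ht; simpa using h1
    have h3 : t * (1/t) = 1 := by field_simp
    nlinarith

private lemma lemA (t : ℝ) (ht0 : 0 ≤ t) (ht1 : t ≤ 1) :
    (t - 1)^2 / 2 ≤ t * Real.log t - t + 1 := by
  have hder : ∀ x ∈ Set.Ioo (0:ℝ) 1, HasDerivAt (fun t : ℝ => t * Real.log t - t + 1 - (t-1)^2/2)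
      ((Real.log x + 1) - 1 + 0 - (↑2 * (x - 1)^(2-1) * (1 - 0))/2) x := by
    intro x hx
    exact ((((Real.hasDerivAt_mul_log hx.1.ne').sub (hasDerivAt_id x)).add
      (hasDerivAt_const x 1)).sub ((((hasDerivAt_id x).sub
      (hasDerivAt_const x 1)).pow 2).div_const 2))
  have hanti : AntitoneOn (fun t : ℝ => t * Real.log t - t + 1 - (t-1)^2/2) (Set.Icc 0 1) := by
    apply antitoneOn_of_deriv_nonpos (convex_Icc 0 1)
    · apply ContinuousOn.sub
      · exact ((Real.continuous_mul_log.sub continuous_id).add continuous_const).continuousOn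
      · exact (by continuity : Continuous fun t : ℝ => (t-1)^2/2).continuousOn
    · intro x hx
      rw [interior_Icc] at hx
      exact (hder x hx).differentiableAt.differentiableWithinAt
    · intro x hx
      rw [interior_Icc] at hx
      rw [(hder x hx).deriv]
      have := Real.log_le_sub_one_of_pos hx.1
      nlinarith
  have h1 := hanti (Set.mem_Icc.2 ⟨ht0, ht1⟩) (Set.mem_Icc.2 ⟨zero_le_one, le_refl 1⟩) ht1
  simp at h1
  linarith

private lemma lemB (t : ℝ) (ht : 1 ≤ t) :
    (t - 1)^2 ≤ 2 * t * (t * Real.log t - t + 1) := by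
  have hder : ∀ x ∈ Set.Ioi (1:ℝ), HasDerivAt
      (fun t : ℝ => 2*t^2 * Real.log t - 2*t^2 + 2*t - (t-1)^2)
      ((2 * (↑2 * x^(2-1) * (1:ℝ)) * Real.log x + 2*x^2 * x⁻¹)
        - 2 * (↑2 * x^(2-1) * (1:ℝ)) + (2*1+0) - (↑2 * (x-1)^(2-1) * (1-0))) x := by
    intro x hx
    have hx0 : (0:ℝ) < x := lt_trans one_pos hx
    have h1 : HasDerivAt (fun t : ℝ => 2*t^2) (2 * (↑2 * x^(2-1) * (1:ℝ))) x := by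
      simpa using (((hasDerivAt_id x).pow 2).const_mul 2)
    have := (((h1.mul (Real.hasDerivAt_log hx0.ne')).sub h1).add
      (((hasDerivAt_id x).const_mul 2).add (hasDerivAt_const x 0))).sub
      (((hasDerivAt_id x).sub (hasDerivAt_const x 1)).pow 2)
    simp at this ⊢
    exact this.congr_of_eventuallyEq (Filter.Eventually.of_forall fun t => by simp [Pi.pow_apply])
  have hmono : MonotoneOn (fun t : ℝ => 2*t^2 * Real.log t - 2*t^2 + 2*t - (t-1)^2) (Set.Ici 1) := by
    apply monotoneOn_of_deriv_nonneg (convex_Ici 1)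
    · apply ContinuousOn.sub
      · apply ContinuousOn.add
        · apply ContinuousOn.sub
          · exact ContinuousOn.mul (by fun_prop) (Real.continuousOn_log.mono (by
              intro x hx; simp at hx ⊢; linarith))
          · fun_prop
        · fun_prop
      · fun_prop
    · intro x hx
      rw [interior_Ici] at hx
      exact (hder x hx).differentiableAt.differentiableWithinAt
    · intro x hx
      rw [interior_Ici] at hx
      rw [(hder x hx).deriv]
      have hx0 : (0:ℝ) < x := lt_trans one_pos hx
      have h3 : x * x⁻¹ = 1 := mul_inv_cancel₀ hx0.ne'
      have h4 := phi_nonneg x hx0.le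
      nlinarith
  have h1 := hmono (Set.mem_Ici.2 (le_refl 1)) (Set.mem_Ici.2 ht) ht
  simp only at h1
  have h2 : (2:ℝ)*1^2 * Real.log 1 - 2*1^2 + 2*1 - (1-1)^2 = 0 := by simp
  nlinarith [h1]

private lemma lemC (x y : ℝ) (hx0 : 0 ≤ x) (hx1 : x ≤ 1) (hy0 : 0 < y) (hy1 : y ≤ 1) :
    (x - y)^2 / 2 ≤ x * Real.log (x / y) - x + y := by
  rcases eq_or_lt_of_le hx0 with h | h
  · simp [← h]; nlinarith
  · have hxy : x / y > 0 := by positivity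
    have hlog : Real.log (x/y) = Real.log x - Real.log y := Real.log_div h.ne' hy0.ne'
    have hkey : x * Real.log (x/y) - x + y = y * ((x/y) * Real.log (x/y) - (x/y) + 1) := by
      field_simp
    rw [hkey]
    rcases le_total x y with hle | hle
    · have ht1 : x / y ≤ 1 := by rw [div_le_one hy0]; exact hle
      have := lemA (x/y) (by positivity) ht1
      have h2 : y * ((x/y - 1)^2/2) ≤ y * ((x/y) * Real.log (x/y) - (x/y) + 1) :=
        mul_le_mul_of_nonneg_left this hy0.le
      have h3 : y * ((x/y - 1)^2/2) = (x - y)^2/(2*y) := by field_simp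
      have h4 : (x - y)^2/2 ≤ (x-y)^2/(2*y) := by
        apply div_le_div_of_nonneg_left (by positivity) (by positivity) (by linarith)
      linarith
    · have ht1 : 1 ≤ x / y := by rw [le_div_iff₀ hy0]; linarith
      have := lemB (x/y) ht1
      have h2 : y * ((x/y - 1)^2 / (2 * (x/y))) ≤ y * ((x/y) * Real.log (x/y) - (x/y) + 1) := by
        apply mul_le_mul_of_nonneg_left _ hy0.le
        rw [div_le_iff₀ (by positivity)]
        linarith [this]
      have h3 : y * ((x/y - 1)^2 / (2 * (x/y))) = (x - y)^2/(2*x) := by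
        field_simp
      have h4 : (x - y)^2/2 ≤ (x-y)^2/(2*x) := by
        apply div_le_div_of_nonneg_left (by positivity) (by positivity) (by linarith)
      linarith

end SinkhornAux

/-- For strictly positive `M` and strictly positive probability vectors `r`, `c`, let
`Mlim λ` be the (unique) minimizer of `D_KL(P‖M^[λ])` over `U(r,c)`, where `M^[λ]` is
the entrywise `λ`-power. Then `Mlim λ` converges entrywise to the outer product
`(r_i · c_j)_{ij}` as `λ → 0⁺`. -/
theorem sinkhorn_limit_as_lambda_to_zero {n m : ℕ}
    (M : Matrix (Fin n) (Fin m) ℝ) (hM : ∀ i j, 0 < M i j)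
    (r : Fin n → ℝ) (c : Fin m → ℝ)
    (hr : ∀ i, 0 < r i) (hc : ∀ j, 0 < c j)
    (hr1 : ∑ i, r i = 1) (hc1 : ∑ j, c j = 1)
    (Mlim : ℝ → Matrix (Fin n) (Fin m) ℝ)
    (hmin : ∀ lam : ℝ, 0 < lam →
      Mlim lam ∈ transportPolytope r c ∧
      ∀ Q ∈ transportPolytope r c,
        klReal (Mlim lam) (fun i j => M i j ^ lam) ≤ klReal Q (fun i j => M i j ^ lam)) :
    Filter.Tendsto Mlim (nhdsWithin 0 (Set.Ioi 0))
      (nhds (fun i j => r i * c j)) := by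
  classical
  set R : Matrix (Fin n) (Fin m) ℝ := fun i j => r i * c j with hRdef
  have hRU : R ∈ transportPolytope r c := by
    refine ⟨fun i j => (mul_pos (hr i) (hc j)).le, fun i => ?_, fun j => ?_⟩
    · rw [← Finset.mul_sum, hc1, mul_one]
    · rw [← Finset.sum_mul, hr1, one_mul]
  have hrle1 : ∀ i, r i ≤ 1 := fun i => by
    rw [← hr1]; exact Finset.single_le_sum (fun k _ => (hr k).le) (Finset.mem_univ i)
  have hcle1 : ∀ j, c j ≤ 1 := fun j => by
    rw [← hc1]; exact Finset.single_le_sum (fun k _ => (hc k).le) (Finset.mem_univ j)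
  set B : ℝ := ∑ i, ∑ j, |Real.log (M i j)| with hBdef
  have hB0 : 0 ≤ B :=
    Finset.sum_nonneg fun i _ => Finset.sum_nonneg fun j _ => abs_nonneg _
  -- entries of polytope members are at most 1
  have hle1 : ∀ P ∈ transportPolytope r c, ∀ i j, P i j ≤ 1 := by
    rintro P ⟨hP0, hProw, _⟩ i j
    have : P i j ≤ ∑ j', P i j' :=
      Finset.single_le_sum (fun k _ => hP0 i k) (Finset.mem_univ j)
    rw [hProw i] at this
    exact this.trans (hrle1 i)
  -- expansion of klReal
  have hexp : ∀ (P N : Matrix (Fin n) (Fin m) ℝ), (∀ i j, 0 ≤ P i j) → (∀ i j, 0 < N i j) →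
      klReal P N = (∑ i, ∑ j, P i j * Real.log (P i j)) - ∑ i, ∑ j, P i j * Real.log (N i j) := by
    intro P N hP hN
    unfold klReal
    rw [← Finset.sum_sub_distrib]
    refine Finset.sum_congr rfl fun i _ => ?_
    rw [← Finset.sum_sub_distrib]
    refine Finset.sum_congr rfl fun j _ => ?_
    rcases eq_or_lt_of_le (hP i j) with h | h
    · simp [← h]
    · rw [Real.log_div h.ne' (hN i j).ne']; ring
  -- bound on ∑∑ P log M
  have habs : ∀ P ∈ transportPolytope r c, |∑ i, ∑ j, P i j * Real.log (M i j)| ≤ B := by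
    intro P hP
    calc |∑ i, ∑ j, P i j * Real.log (M i j)|
        ≤ ∑ i, |∑ j, P i j * Real.log (M i j)| := Finset.abs_sum_le_sum_abs _ _
      _ ≤ ∑ i, ∑ j, |P i j * Real.log (M i j)| :=
          Finset.sum_le_sum fun i _ => Finset.abs_sum_le_sum_abs _ _
      _ ≤ B := by
          rw [hBdef]
          refine Finset.sum_le_sum fun i _ => Finset.sum_le_sum fun j _ => ?_
          rw [abs_mul, abs_of_nonneg (hP.1 i j)]
          calc P i j * |Real.log (M i j)| ≤ 1 * |Real.log (M i j)| :=
                mul_le_mul_of_nonneg_right (hle1 P hP i j) (abs_nonneg _)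
            _ = |Real.log (M i j)| := one_mul _
  -- constant K
  have hKid : ∀ P ∈ transportPolytope r c,
      (∑ i, ∑ j, P i j * Real.log (R i j))
        = ∑ i, r i * Real.log (r i) + ∑ j, c j * Real.log (c j) := by
    rintro P ⟨hP0, hProw, hPcol⟩
    have hsplit : ∀ i j, P i j * Real.log (R i j)
        = P i j * Real.log (r i) + P i j * Real.log (c j) := by
      intro i j
      have : R i j = r i * c j := rfl
      rw [this, Real.log_mul (hr i).ne' (hc j).ne', mul_add]
    simp_rw [hsplit, Finset.sum_add_distrib]
    congr 1
    · refine Finset.sum_congr rfl fun i _ => ?_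
      rw [← Finset.sum_mul, hProw i]
    · rw [Finset.sum_comm]
      refine Finset.sum_congr rfl fun j _ => ?_
      rw [← Finset.sum_mul, hPcol j]
  -- key per-entry bound
  have key : ∀ lam : ℝ, 0 < lam → ∀ i j, (Mlim lam i j - r i * c j)^2 ≤ 4 * B * lam := by
    intro lam hl i j
    obtain ⟨hU, hopt⟩ := hmin lam hl
    obtain ⟨hP0, hProw, hPcol⟩ := hU
    have hMl : ∀ i' j', (0:ℝ) < M i' j' ^ lam := fun i' j' => Real.rpow_pos_of_pos (hM i' j') lam
    have hrpow : ∀ (Q : Matrix (Fin n) (Fin m) ℝ),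
        (∑ i', ∑ j', Q i' j' * Real.log (M i' j' ^ lam))
          = lam * ∑ i', ∑ j', Q i' j' * Real.log (M i' j') := by
      intro Q
      rw [Finset.mul_sum]
      refine Finset.sum_congr rfl fun i' _ => ?_
      rw [Finset.mul_sum]
      refine Finset.sum_congr rfl fun j' _ => ?_
      rw [Real.log_rpow (hM i' j')]; ring
    have hle := hopt R hRU
    rw [hexp (Mlim lam) (fun i' j' => M i' j' ^ lam) hP0 hMl,
        hexp R (fun i' j' => M i' j' ^ lam) hRU.1 hMl, hrpow, hrpow] at hle
    -- E(R) = K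
    have hER : (∑ i', ∑ j', R i' j' * Real.log (R i' j'))
        = ∑ i', r i' * Real.log (r i') + ∑ j', c j' * Real.log (c j') := hKid R hRU
    -- klReal (Mlim lam) R = E(P) - K
    have hklPR : klReal (Mlim lam) R
        = (∑ i', ∑ j', Mlim lam i' j' * Real.log (Mlim lam i' j'))
          - (∑ i', r i' * Real.log (r i') + ∑ j', c j' * Real.log (c j')) := by
      rw [hexp (Mlim lam) R hP0 (fun i' j' => mul_pos (hr i') (hc j')),
        hKid (Mlim lam) ⟨hP0, hProw, hPcol⟩]
    -- G bounds
    have hGP := abs_le.1 (habs (Mlim lam) ⟨hP0, hProw, hPcol⟩)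
    have hGR := abs_le.1 (habs R hRU)
    have hD : klReal (Mlim lam) R ≤ 2 * B * lam := by
      have h2 : (∑ i', ∑ j', Mlim lam i' j' * Real.log (M i' j'))
          - (∑ i', ∑ j', R i' j' * Real.log (M i' j')) ≤ 2 * B := by
        linarith [hGP.1, hGP.2, hGR.1, hGR.2]
      nlinarith [hle, hER, hklPR]
    -- klReal P R as sum of nonneg terms
    have hsP : ∑ i', ∑ j', Mlim lam i' j' = 1 := by
      rw [Finset.sum_congr rfl fun i' _ => hProw i', hr1]
    have hsR : ∑ i', ∑ j', R i' j' = 1 := by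
      rw [Finset.sum_congr rfl fun i' _ => hRU.2.1 i', hr1]
    have hterm : ∀ i' j', (Mlim lam i' j' - R i' j')^2/2
        ≤ Mlim lam i' j' * Real.log (Mlim lam i' j' / R i' j') - Mlim lam i' j' + R i' j' := by
      intro i' j'
      exact lemC _ _ (hP0 i' j') (hle1 _ ⟨hP0, hProw, hPcol⟩ i' j') (mul_pos (hr i') (hc j'))
        (mul_le_one₀ (hrle1 i') (hc j').le (hcle1 j'))
    have hsum : (∑ i', ∑ j', (Mlim lam i' j' * Real.log (Mlim lam i' j' / R i' j')
        - Mlim lam i' j' + R i' j')) = klReal (Mlim lam) R := by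
      unfold klReal
      have : ∀ i', (∑ j', (Mlim lam i' j' * Real.log (Mlim lam i' j' / R i' j')
          - Mlim lam i' j' + R i' j'))
          = (∑ j', Mlim lam i' j' * Real.log (Mlim lam i' j' / R i' j'))
            - (∑ j', Mlim lam i' j') + (∑ j', R i' j') := by
        intro i'; rw [Finset.sum_add_distrib, Finset.sum_sub_distrib]
      rw [Finset.sum_congr rfl fun i' _ => this i', Finset.sum_add_distrib,
        Finset.sum_sub_distrib, hsP, hsR]
      ring
    have hsingle : (Mlim lam i j - R i j)^2/2 ≤ klReal (Mlim lam) R := by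
      rw [← hsum]
      have hnn : ∀ i' j', 0 ≤ Mlim lam i' j' * Real.log (Mlim lam i' j' / R i' j')
          - Mlim lam i' j' + R i' j' := fun i' j' =>
        le_trans (by positivity) (hterm i' j')
      calc (Mlim lam i j - R i j)^2/2
          ≤ Mlim lam i j * Real.log (Mlim lam i j / R i j) - Mlim lam i j + R i j := hterm i j
        _ ≤ ∑ j', (Mlim lam i j' * Real.log (Mlim lam i j' / R i j')
            - Mlim lam i j' + R i j') :=
            Finset.single_le_sum (fun k _ => hnn i k) (Finset.mem_univ j)
        _ ≤ ∑ i', ∑ j', (Mlim lam i' j' * Real.log (Mlim lam i' j' / R i' j')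
            - Mlim lam i' j' + R i' j') :=
            Finset.single_le_sum (fun k _ => Finset.sum_nonneg fun j' _ => hnn k j')
              (Finset.mem_univ i)
    have hRij : R i j = r i * c j := rfl
    rw [← hRij]
    linarith [hsingle, hD]
  -- topology
  refine tendsto_pi_nhds.2 ?_
  intro i
  rw [tendsto_pi_nhds]
  intro j
  have hsq : Filter.Tendsto (fun lam : ℝ => Real.sqrt (4*B*lam)) (nhdsWithin 0 (Set.Ioi 0))
      (nhds 0) := by
    have h0 : Filter.Tendsto (fun lam : ℝ => Real.sqrt (4*B*lam)) (nhds 0)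
        (nhds (Real.sqrt (4*B*0))) :=
      (Real.continuous_sqrt.comp (continuous_const.mul continuous_id)).tendsto 0
    rw [show (4*B*(0:ℝ)) = 0 by ring, Real.sqrt_zero] at h0
    exact h0.mono_left nhdsWithin_le_nhds
  rw [tendsto_iff_dist_tendsto_zero]
  refine squeeze_zero' ?_ ?_ hsq
  · exact Filter.Eventually.of_forall fun _ => dist_nonneg
  · refine Filter.eventually_of_mem self_mem_nhdsWithin fun lam hlam => ?_
    rw [Real.dist_eq]
    calc |Mlim lam i j - r i * c j|
        = Real.sqrt ((Mlim lam i j - r i * c j)^2) := (Real.sqrt_sq_eq_abs _).symm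
      _ ≤ Real.sqrt (4*B*lam) := Real.sqrt_le_sqrt (key lam hlam i j)
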